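/- Let M be a k×k real symmetric positive semidefinite matrix with all diagonal entries equal to n and all off-diagonal entries integers ≥ 1, and suppose M ≠ (n-1)I + J. Then λ_max(M) > n + k - 1. -/

import Mathlib

open Matrix

lemma rayleigh_le_sup'_aux {k : ℕ} (hk : 0 < k) (M : Matrix (Fin k) (Fin k) ℝ)
    (hM : M.IsHermitian) (x : Fin k → ℝ) :
    x ⬝ᵥ (M *ᵥ x) ≤ (Finset.univ.sup' ⟨⟨0, hk⟩, Finset.mem_univ _⟩ hM.eigenvalues) * (x ⬝ᵥ x) := by
  set U : Matrix (Fin k) (Fin k) ℝ := (hM.eigenvectorUnitary : Matrix (Fin k) (Fin k) ℝ) with hU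
  set y := star U *ᵥ x with hy
  have hUU : U * star U = 1 := Matrix.mem_unitaryGroup_iff.mp hM.eigenvectorUnitary.2
  have hstar : star U = Uᵀ := by
    rw [Matrix.star_eq_conjTranspose, Matrix.conjTranspose_eq_transpose_of_trivial]
  have hvm : x ᵥ* U = y := by
    rw [hy, hstar, Matrix.mulVec_transpose]
  have key : x ⬝ᵥ (M *ᵥ x) = ∑ i, hM.eigenvalues i * (y i)^2 := by
    conv_lhs => rw [hM.spectral_theorem, Unitary.conjStarAlgAut_apply]
    rw [← Matrix.mulVec_mulVec, ← Matrix.mulVec_mulVec, Matrix.dotProduct_mulVec, hvm, ← hy]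
    simp [dotProduct, Matrix.mulVec_diagonal, pow_two]
    exact Finset.sum_congr rfl fun i _ => by ring
  have key2 : x ⬝ᵥ x = ∑ i, (y i)^2 := by
    have : y ⬝ᵥ y = x ⬝ᵥ x := by
      rw [hy, Matrix.dotProduct_mulVec, hstar, Matrix.vecMul_transpose, Matrix.mulVec_mulVec,
        ← hstar, hUU, Matrix.one_mulVec]
    rw [← this]
    simp [dotProduct, pow_two]
  rw [key, key2, Finset.mul_sum]
  apply Finset.sum_le_sum
  intro i _
  exact mul_le_mul_of_nonneg_right (Finset.le_sup' _ (Finset.mem_univ i)) (sq_nonneg _)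

theorem stmt_6 (k n : ℕ) (hk : 2 ≤ k) (hn : 0 < n)
    (M : Matrix (Fin k) (Fin k) ℝ) (hM : M.PosSemidef)
    (hdiag : ∀ i, M i i = (n : ℝ))
    (hoff : ∀ i j, i ≠ j → ∃ z : ℤ, 1 ≤ z ∧ M i j = (z : ℝ))
    (hne : M ≠ ((n : ℝ) - 1) • (1 : Matrix (Fin k) (Fin k) ℝ)
        + Matrix.of (fun _ _ => (1 : ℝ))) :
    (n : ℝ) + (k : ℝ) - 1 <
      Finset.univ.sup' ⟨⟨0, by omega⟩, Finset.mem_univ _⟩ hM.1.eigenvalues := by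
  have hk0 : 0 < k := by omega
  -- find an off-diagonal entry ≥ 2
  have hab : ∃ a b, a ≠ b ∧ (2 : ℝ) ≤ M a b := by
    by_contra h
    push_neg at h
    apply hne
    ext i j
    simp only [Matrix.add_apply, Matrix.smul_apply, Matrix.one_apply, Matrix.of_apply,
      smul_eq_mul]
    by_cases hij : i = j
    · subst hij; simp [hdiag i]
    · obtain ⟨z, hz1, hzM⟩ := hoff i j hij
      have h2 := h i j hij
      rw [hzM] at h2 ⊢
      have : z < 2 := by exact_mod_cast h2
      have : z = 1 := by omega
      simp [this, hij]
  obtain ⟨a, b, hab_ne, hab2⟩ := hab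
  set x : Fin k → ℝ := fun _ => 1 with hx
  have hxx : x ⬝ᵥ x = (k : ℝ) := by simp [hx, dotProduct]
  have hMx : x ⬝ᵥ (M *ᵥ x) = ∑ i, ∑ j, M i j := by
    simp [hx, dotProduct, Matrix.mulVec]
  have hlb : (k : ℝ) * ((n : ℝ) + (k : ℝ) - 1) < ∑ i, ∑ j, M i j := by
    have hN : ∀ i j, ((if i = j then (n : ℝ) - 1 else 0)
        + (if i = a ∧ j = b then 1 else 0) + 1) ≤ M i j := by
      intro i j
      by_cases hij : i = j
      · subst hij
        have : ¬ (i = a ∧ i = b) := by rintro ⟨rfl, rfl⟩; exact hab_ne rfl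
        simp [this, hdiag i]
      · obtain ⟨z, hz1, hzM⟩ := hoff i j hij
        have hz : (1 : ℝ) ≤ M i j := by rw [hzM]; exact_mod_cast hz1
        by_cases hb : i = a ∧ j = b
        · obtain ⟨rfl, rfl⟩ := hb
          simp [hij, hab_ne]
          linarith
        · simp [hij, hb]
          linarith
    calc (k : ℝ) * ((n : ℝ) + (k : ℝ) - 1)
        < ∑ i, ∑ j, ((if i = j then (n : ℝ) - 1 else 0)
            + (if i = a ∧ j = b then 1 else 0) + 1) := by
          have : ∀ i : Fin k, ∑ j, ((if i = j then (n : ℝ) - 1 else 0)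
              + (if i = a ∧ j = b then 1 else 0) + 1)
              = ((n : ℝ) - 1) + (if i = a then 1 else 0) + k := by
            intro i
            rw [Finset.sum_add_distrib, Finset.sum_add_distrib]
            congr 1
            · congr 1
              · simp
              · by_cases hia : i = a <;> simp [hia]
            · simp
          rw [Finset.sum_congr rfl (fun i _ => this i), Finset.sum_add_distrib,
            Finset.sum_add_distrib]
          simp
          have hkk : (1 : ℝ) ≤ (k:ℝ) := by exact_mod_cast hk0
          nlinarith [hkk]
      _ ≤ ∑ i, ∑ j, M i j :=
          Finset.sum_le_sum fun i _ => Finset.sum_le_sum fun j _ => hN i j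
  have hray := rayleigh_le_sup'_aux hk0 M hM.1 x
  rw [hMx, hxx] at hray
  have hkpos : (0 : ℝ) < k := by exact_mod_cast hk0
  nlinarith [hray, hlb]
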